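/- arXiv:2206.05241 — 2 statements merged into one kernel-verified Lean document; each statement's English description precedes it below -/
import Mathlib

section
/- In the infinitely repeated prisoners' dilemma with u(C,C)=(3,3), u(D,C)=(4,0), u(C,D)=(0,4), u(D,D)=(1,1) and discount factor δ ≥ 1/3, the grim-trigger strategy profile (cooperate until someone defects, then defect forever) is a subgame perfect equilibrium but is not a credible equilibrium. -/
/-!  A formal model of multi-stage games (Ismail, "Credible equilibrium").

A multi-stage game `G = (G^1, …, G^T)` is modeled by stage strategy spaces
`A t i` (possibly mixed strategies) for each stage `t` and player `i`, stage
payoff functions `u i t`, and a discount factor `δ`; a finite horizon `T` is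
the special case where stage payoffs vanish from stage `T` on.  A subgame is
identified by a stage `k` together with a history (a path, of which only the
first `k` entries matter); two subgames are equivalent iff they start at the
same stage.  -/

namespace MSG

variable {ι : Type}

/-- A path of play: an action profile at every stage. -/
abbrev PlayPath (A : ℕ → ι → Type) := ∀ t, ∀ i, A t i

/-- A strategy of player `i`: an action at every stage `t` as a function of the
history, depending only on play before stage `t`. -/
structure PStrat (A : ℕ → ι → Type) (i : ι) where
  act : ∀ t, PlayPath A → A t i
  adapted : ∀ t (p q : PlayPath A), (∀ s, s < t → p s = q s) → act t p = act t q

/-- A strategy profile. -/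
abbrev Profile (A : ℕ → ι → Type) := ∀ i, PStrat A i

/-- The play induced by profile `σ` in the subgame starting at stage `k` after
history `h`, computed up to stage `n`. -/
noncomputable def outcomeUpTo (A : ℕ → ι → Type) (σ : Profile A) (k : ℕ) (h : PlayPath A) :
    ℕ → PlayPath A
  | 0 => h
  | t + 1 =>
    Function.update (outcomeUpTo A σ k h t) t
      (if t < k then h t else fun i => (σ i).act t (outcomeUpTo A σ k h t))

/-- The path of play induced by `σ` from the subgame `(k, h)`. -/
noncomputable def outcome (A : ℕ → ι → Type) (σ : Profile A) (k : ℕ) (h : PlayPath A) :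
    PlayPath A :=
  fun t => outcomeUpTo A σ k h (t + 1) t

/-- Player `i`'s discounted payoff in the subgame starting at stage `k` after
history `h` under profile `σ`. -/
noncomputable def subPayoff (A : ℕ → ι → Type) (u : ι → ∀ t, (∀ i, A t i) → ℝ) (δ : ℝ)
    (σ : Profile A) (k : ℕ) (h : PlayPath A) (i : ι) : ℝ :=
  ∑' t : ℕ, δ ^ t * u i (k + t) (outcome A σ k h (k + t))

/-- `σ` restricted to the subgame `(k, h)` is a Nash equilibrium. -/
def NashFrom [DecidableEq ι] (A : ℕ → ι → Type) (u : ι → ∀ t, (∀ i, A t i) → ℝ) (δ : ℝ)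
    (σ : Profile A) (k : ℕ) (h : PlayPath A) : Prop :=
  ∀ i (τ : PStrat A i),
    subPayoff A u δ (Function.update σ i τ) k h i ≤ subPayoff A u δ σ k h i

/-- Subgame perfect equilibrium: Nash in every subgame. -/
def SPE [DecidableEq ι] (A : ℕ → ι → Type) (u : ι → ∀ t, (∀ i, A t i) → ℝ) (δ : ℝ)
    (σ : Profile A) : Prop :=
  ∀ k h, NashFrom A u δ σ k h

/-- Replace the first `k` stages of `p` by the history `h`. -/
def splice (A : ℕ → ι → Type) (k : ℕ) (h p : PlayPath A) : PlayPath A :=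
  fun s => if s < k then h s else p s

/-- Player `i`'s strategy `σi` has the same restriction to the equivalent
subgames `(k, h)` and `(k, h')`. -/
def SameRestriction (A : ℕ → ι → Type) {i : ι} (σi : PStrat A i) (k : ℕ)
    (h h' : PlayPath A) : Prop :=
  ∀ t, k ≤ t → ∀ p : PlayPath A, σi.act t (splice A k h p) = σi.act t (splice A k h' p)

/-- Credible equilibrium: an SPE such that whenever a player's strategy differs
on two equivalent subgames, her payoffs in those subgames coincide. -/
def Credible [DecidableEq ι] (A : ℕ → ι → Type) (u : ι → ∀ t, (∀ i, A t i) → ℝ) (δ : ℝ)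
    (σ : Profile A) : Prop :=
  SPE A u δ σ ∧ ∀ k (h h' : PlayPath A) i, ¬ SameRestriction A (σ i) k h h' →
    subPayoff A u δ σ k h i = subPayoff A u δ σ k h' i

end MSG

namespace MSG

/-- Prisoners' dilemma stage payoff (`true` = Cooperate, `false` = Defect):
`u(C,C)=3`, `u(C,D)=0`, `u(D,C)=4`, `u(D,D)=1`. -/
def pdPay (a b : Bool) : ℝ :=
  if a then (if b then 3 else 0) else (if b then 4 else 1)

/-- Stage payoffs of the infinitely repeated prisoners' dilemma with two
players indexed by `Bool`. -/
def pdU : Bool → ∀ _ : ℕ, (Bool → Bool) → ℝ :=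
  fun i _ p => pdPay (p i) (p (!i))

open Classical in
/-- The grim-trigger profile: cooperate as long as nobody has ever defected,
otherwise defect forever. -/
noncomputable def grimTrigger : Profile (fun (_ : ℕ) (_ : Bool) => Bool) :=
  fun _ =>
    { act := fun t h => if ∀ s, s < t → ∀ j, h s j = true then true else false
      adapted := by
        intro t p q hpq
        have hiff : (∀ s, s < t → ∀ j, p s j = true) ↔
            (∀ s, s < t → ∀ j, q s j = true) := by
          constructor <;> intro H s hs j
          · rw [← hpq s hs]; exact H s hs j
          · rw [hpq s hs]; exact H s hs j
        simp only [hiff] }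

end MSG

namespace MSG

section OutcomeLemmas
variable {ι : Type} {A : ℕ → ι → Type} (σ : Profile A) (k : ℕ) (h : PlayPath A)

lemma outcomeUpTo_of_le : ∀ n s, n ≤ s → outcomeUpTo A σ k h n s = h s
  | 0, s, _ => rfl
  | n+1, s, hns => by
      rw [outcomeUpTo, Function.update_of_ne (by omega : s ≠ n)]
      exact outcomeUpTo_of_le n s (by omega)

lemma outcomeUpTo_of_lt : ∀ n s, s < n → outcomeUpTo A σ k h n s = outcome A σ k h s
  | n+1, s, hs => by
      rcases eq_or_lt_of_le (Nat.lt_succ_iff.mp hs) with he | hl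
      · subst he; rfl
      · rw [outcomeUpTo, Function.update_of_ne (by omega : s ≠ n)]
        exact outcomeUpTo_of_lt n s hl

lemma outcome_spec (t : ℕ) :
    outcome A σ k h t = if t < k then h t else fun i => (σ i).act t (outcome A σ k h) := by
  have h1 : outcome A σ k h t = outcomeUpTo A σ k h (t+1) t := rfl
  rw [h1, outcomeUpTo, Function.update_self]
  split_ifs with ht
  · rfl
  · funext i
    exact (σ i).adapted t _ _ (fun s hs => outcomeUpTo_of_lt σ k h t s hs)

lemma outcome_lt (t : ℕ) (ht : t < k) : outcome A σ k h t = h t := by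
  rw [outcome_spec, if_pos ht]

lemma outcome_ge (t : ℕ) (ht : k ≤ t) (i : ι) :
    outcome A σ k h t i = (σ i).act t (outcome A σ k h) := by
  rw [outcome_spec, if_neg (by omega)]

end OutcomeLemmas

section Grim

open Classical

lemma grim_act_pos {i t} {p : PlayPath (fun (_ : ℕ) (_ : Bool) => Bool)}
    (H : ∀ s, s < t → ∀ j, p s j = true) : (grimTrigger i).act t p = true := by
  show (if ∀ s, s < t → ∀ j, p s j = true then true else false) = true
  exact if_pos H

lemma grim_act_neg {i t} {p : PlayPath (fun (_ : ℕ) (_ : Bool) => Bool)}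
    (H : ¬ ∀ s, s < t → ∀ j, p s j = true) : (grimTrigger i).act t p = false := by
  show (if ∀ s, s < t → ∀ j, p s j = true then true else false) = false
  exact if_neg H

variable (k : ℕ) (h : PlayPath (fun (_ : ℕ) (_ : Bool) => Bool))

/-- Along a clean history, grim trigger cooperates forever. -/
lemma grim_outcome_clean (hc : ∀ s, s < k → ∀ j, h s j = true) :
    ∀ t j, outcome _ grimTrigger k h t j = true := by
  intro t
  induction t using Nat.strong_induction_on with
  | _ t ih =>
    intro j
    by_cases ht : t < k
    · rw [outcome_lt _ _ _ t ht]; exact hc t ht j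
    · rw [outcome_ge _ _ _ t (by omega) j]
      exact grim_act_pos (fun s hs j' => ih s hs j')

/-- A profile in which some player `j0` plays grim trigger, after a dirty
history: player `j0` defects forever. -/
lemma grim_outcome_dirty (σ : Profile (fun (_ : ℕ) (_ : Bool) => Bool)) (j0 : Bool)
    (hσ : σ j0 = grimTrigger j0)
    (hd : ¬ ∀ s, s < k → ∀ j, h s j = true) :
    ∀ t, k ≤ t → outcome _ σ k h t j0 = false := by
  intro t ht
  rw [outcome_ge _ _ _ t ht j0, hσ]
  apply grim_act_neg
  intro H
  exact hd (fun s hs j => by rw [← H s (by omega) j, outcome_lt _ _ _ s hs])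

/-- If all of player `i`'s on-path actions before stage `n` are `C` and the
history is clean, then everyone plays `C` before stage `n` (all other players
being grim). -/
lemma dev_clean_prefix (σ : Profile (fun (_ : ℕ) (_ : Bool) => Bool)) (i : Bool)
    (hσ : ∀ j, j ≠ i → σ j = grimTrigger j)
    (hc : ∀ s, s < k → ∀ j, h s j = true) (n : ℕ)
    (hi : ∀ s, s < n → k ≤ s → outcome _ σ k h s i = true) :
    ∀ s, s < n → ∀ j, outcome _ σ k h s j = true := by
  intro s
  induction s using Nat.strong_induction_on with
  | _ s ih =>
    intro hs j
    by_cases hsk : s < k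
    · rw [outcome_lt _ _ _ s hsk]; exact hc s hsk j
    · by_cases hj : j = i
      · subst hj; exact hi s hs (by omega)
      · rw [outcome_ge _ _ _ s (by omega) j, hσ j hj]
        exact grim_act_pos (fun u hu j' => ih u hu (by omega) j')

end Grim

section PayoffLemmas

lemma pdPay_nonneg (a b : Bool) : 0 ≤ pdPay a b := by
  cases a <;> cases b <;> norm_num [pdPay]

lemma pdPay_le_four (a b : Bool) : pdPay a b ≤ 4 := by
  cases a <;> cases b <;> norm_num [pdPay]

lemma pdPay_def_le (a : Bool) : pdPay a false ≤ 1 := by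
  cases a <;> norm_num [pdPay]

lemma summable_pay {δ : ℝ} (hδ0 : 0 ≤ δ) (hδ1 : δ < 1) (f : ℕ → ℝ) (h0 : ∀ t, 0 ≤ f t) (h4 : ∀ t, f t ≤ 4) :
    Summable (fun t => δ ^ t * f t) := by
  apply Summable.of_nonneg_of_le (fun t => mul_nonneg (pow_nonneg hδ0 t) (h0 t))
    (fun t => mul_le_mul_of_nonneg_left (h4 t) (pow_nonneg hδ0 t))
  exact (summable_geometric_of_lt_one hδ0 hδ1).mul_right 4

end PayoffLemmas

end MSG

open MSG in
/-- In the infinitely repeated prisoners' dilemma with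
discount factor `δ ∈ [1/3, 1)`, the grim-trigger profile is a subgame perfect
equilibrium but is not a credible equilibrium. -/
theorem grim_trigger_SPE_not_credible
    (δ : ℝ) (hδ0 : (1 : ℝ) / 3 ≤ δ) (hδ1 : δ < 1) :
    SPE (fun _ _ => Bool) pdU δ grimTrigger ∧
      ¬ Credible (fun _ _ => Bool) pdU δ grimTrigger := by
  have hδ0' : (0:ℝ) ≤ δ := by linarith
  have hgeo : Summable fun t : ℕ => δ ^ t := summable_geometric_of_lt_one hδ0' hδ1
  have hgsum : ∑' t : ℕ, δ ^ t = (1 - δ)⁻¹ := tsum_geometric_of_lt_one hδ0' hδ1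
  have hinvpos : (0:ℝ) < (1 - δ)⁻¹ := inv_pos.2 (by linarith)
  -- closed form for the grim payoff after a clean history
  have hgrimclean : ∀ k (h : PlayPath (fun (_ : ℕ) (_ : Bool) => Bool)) i,
      (∀ s, s < k → ∀ j, h s j = true) →
      subPayoff (fun _ _ => Bool) pdU δ grimTrigger k h i = ∑' t : ℕ, δ ^ t * 3 := by
    intro k h i hc
    apply tsum_congr; intro t
    have hq := grim_outcome_clean k h hc
    simp [pdU, hq, pdPay]
  have hSPE : SPE (fun _ _ => Bool) pdU δ grimTrigger := by
    intro k h i τ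
    set σ' := Function.update grimTrigger i τ with hσ'def
    have hτi : ∀ j, j ≠ i → σ' j = grimTrigger j := fun j hj => Function.update_of_ne hj _ _
    set p := outcome (fun _ _ => Bool) σ' k h with hpdef
    have hsum : Summable (fun t => δ ^ t * pdU i (k + t) (p (k + t))) :=
      summable_pay hδ0' hδ1 _ (fun t => pdPay_nonneg _ _) (fun t => pdPay_le_four _ _)
    by_cases hc : ∀ s, s < k → ∀ j, h s j = true
    · -- clean history
      rw [hgrimclean k h i hc]
      show (∑' t : ℕ, δ ^ t * pdU i (k + t) (p (k + t))) ≤ _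
      by_cases hall : ∀ t, p (k + t) i = true
      · -- the deviator never defects on path: everyone cooperates
        have hip : ∀ s j, p s j = true := by
          intro s j
          refine dev_clean_prefix k h σ' i hτi hc (s+1) ?_ s (by omega) j
          intro u _ hku
          have := hall (u - k); rwa [Nat.add_sub_cancel' hku] at this
        apply le_of_eq
        apply tsum_congr; intro t
        simp [pdU, hip, pdPay]
      · -- defects at some stage; let m be the first one
        push_neg at hall
        have hall' : ∃ t, p (k + t) i = false := by
          obtain ⟨t, ht⟩ := hall; exact ⟨t, by simpa using ht⟩
        set m := Nat.find hall' with hmdef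
        have F2 : p (k + m) i = false := Nat.find_spec hall'
        have hmlt : ∀ t, t < m → p (k + t) i = true := by
          intro t ht
          have := Nat.find_min hall' ht
          simpa using this
        have F1 : ∀ s, s < k + m → ∀ j, p s j = true := by
          apply dev_clean_prefix k h σ' i hτi hc
          intro s hs hks
          have := hmlt (s - k) (by omega)
          rwa [Nat.add_sub_cancel' hks] at this
        have hnoti : (!i) ≠ i := Bool.not_ne_self i
        have F3 : p (k + m) (!i) = true := by
          rw [hpdef, outcome_ge _ _ _ _ (by omega), hτi _ hnoti]
          exact grim_act_pos (fun s hs j => F1 s hs j)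
        have F4 : ∀ t, m < t → p (k + t) (!i) = false := by
          intro t ht
          rw [hpdef, outcome_ge _ _ _ _ (by omega), hτi _ hnoti]
          apply grim_act_neg
          intro H
          have := H (k + m) (by omega) i
          rw [← hpdef, F2] at this
          exact Bool.false_ne_true this
        -- split both sums at stage m+1
        set f := fun t => δ ^ t * pdU i (k + t) (p (k + t)) with hfdef
        set g := fun t : ℕ => δ ^ t * 3 with hgdef
        have hgsumm : Summable g := hgeo.mul_right 3
        rw [← Summable.sum_add_tsum_nat_add (m+1) hsum, ← Summable.sum_add_tsum_nat_add (m+1) hgsumm]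
        have hhead : ∀ t ∈ Finset.range m, f t = g t := by
          intro t ht
          rw [Finset.mem_range] at ht
          have h1 : p (k + t) i = true := F1 _ (by omega) _
          have h2 : p (k + t) (!i) = true := F1 _ (by omega) _
          simp [hfdef, hgdef, pdU, h1, h2, pdPay]
        have hfm : f m = δ ^ m * 4 := by
          simp [hfdef, pdU, F2, F3, pdPay]
        have hgm : g m = δ ^ m * 3 := rfl
        have htailf : (∑' t : ℕ, f (t + (m+1))) ≤ (1 - δ)⁻¹ * δ ^ (m+1) := by
          have hb : ∀ t : ℕ, f (t + (m+1)) ≤ δ ^ (t + (m+1)) * 1 := by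
            intro t
            have h4 : p (k + (t + (m+1))) (!i) = false := F4 _ (by omega)
            rw [hfdef]
            simp only []
            rw [show pdU i (k + (t + (m+1))) (p (k + (t + (m+1)))) =
                pdPay (p (k + (t + (m+1))) i) (p (k + (t + (m+1))) (!i)) from rfl, h4]
            exact mul_le_mul_of_nonneg_left (pdPay_def_le _) (pow_nonneg hδ0' _)
          calc (∑' t : ℕ, f (t + (m+1)))
              ≤ ∑' t : ℕ, δ ^ (t + (m+1)) * 1 := by
                refine Summable.tsum_le_tsum hb ((summable_nat_add_iff (m+1)).2 hsum) ?_
                simpa using (hgeo.mul_right (δ ^ (m+1))).congr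
                  (fun t => by rw [pow_add]; ring)
            _ = (1 - δ)⁻¹ * δ ^ (m+1) := by
                rw [show (fun t : ℕ => δ ^ (t + (m+1)) * 1) = fun t : ℕ => δ ^ t * δ ^ (m+1)
                  from funext fun t => by rw [pow_add]; ring, tsum_mul_right, hgsum]
        have htailg : (∑' t : ℕ, g (t + (m+1))) = (1 - δ)⁻¹ * δ ^ (m+1) * 3 := by
          rw [show (fun t : ℕ => g (t + (m+1))) = fun t : ℕ => δ ^ t * (δ ^ (m+1) * 3)
            from funext fun t => by rw [hgdef]; simp only []; rw [pow_add]; ring,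
            tsum_mul_right, hgsum]
          ring
        rw [Finset.sum_range_succ, Finset.sum_range_succ, Finset.sum_congr rfl hhead,
          hfm, hgm, htailg]
        have hpow : (0:ℝ) ≤ δ ^ m := pow_nonneg hδ0' m
        have hkey : δ ^ m * 4 + (1 - δ)⁻¹ * δ ^ (m+1) ≤
            δ ^ m * 3 + (1 - δ)⁻¹ * δ ^ (m+1) * 3 := by
          have hc1 : (1 - δ) * (1 - δ)⁻¹ = 1 := mul_inv_cancel₀ (by linarith)
          have h3 : (0:ℝ) ≤ (1 - δ)⁻¹ * δ ^ m * (3 * δ - 1) :=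
            mul_nonneg (mul_nonneg hinvpos.le hpow) (by linarith)
          rw [pow_succ]
          nlinarith [h3, hc1, hpow]
        linarith [htailf, hkey]
    · -- dirty history: grim plays D forever; the stage payoff vs D is at most 1
      have hq : ∀ t j, outcome (fun _ _ => Bool) grimTrigger k h (k + t) j = false :=
        fun t j => grim_outcome_dirty k h grimTrigger j rfl hc (k + t) (by omega)
      have hb : ∀ t : ℕ, δ ^ t * pdU i (k + t) (p (k + t)) ≤
          δ ^ t * pdU i (k + t) (outcome (fun _ _ => Bool) grimTrigger k h (k + t)) := by
        intro t
        have h4 : p (k + t) (!i) = false :=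
          grim_outcome_dirty k h σ' (!i) (hτi _ (Bool.not_ne_self i)) hc (k + t) (by omega)
        have hgr : pdU i (k + t) (outcome (fun _ _ => Bool) grimTrigger k h (k + t)) = 1 := by
          simp [pdU, hq, pdPay]
        rw [hgr, show pdU i (k + t) (p (k + t)) =
          pdPay (p (k + t) i) (p (k + t) (!i)) from rfl, h4]
        exact mul_le_mul_of_nonneg_left (pdPay_def_le _) (pow_nonneg hδ0' _)
      exact Summable.tsum_le_tsum hb hsum
        (summable_pay hδ0' hδ1 _ (fun t => pdPay_nonneg _ _) (fun t => pdPay_le_four _ _))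
  refine ⟨hSPE, ?_⟩
  rintro ⟨-, hcr⟩
  have hclean : ∀ s, s < 1 → ∀ j : Bool, (fun (_ : ℕ) (_ : Bool) => true) s j = true :=
    fun _ _ _ => rfl
  have hdirty : ¬ ∀ s, s < 1 → ∀ j : Bool, (fun (_ : ℕ) (_ : Bool) => false) s j = true := by
    intro H
    exact Bool.false_ne_true (H 0 (by omega) true)
  have hne := hcr 1 (fun _ _ => true) (fun _ _ => false) true ?_
  · -- payoffs differ: 3/(1-δ) vs 1/(1-δ)
    rw [hgrimclean 1 _ true hclean] at hne
    have hq : ∀ t j, outcome (fun _ _ => Bool) grimTrigger 1 (fun _ _ => false) (1 + t) j =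
        false := fun t j => grim_outcome_dirty 1 _ grimTrigger j rfl hdirty (1 + t) (by omega)
    have h2 : subPayoff (fun _ _ => Bool) pdU δ grimTrigger 1 (fun _ _ => false) true =
        ∑' t : ℕ, δ ^ t * 1 := by
      apply tsum_congr; intro t
      simp [pdU, hq, pdPay]
    rw [h2, tsum_mul_right, tsum_mul_right, hgsum] at hne
    nlinarith [hinvpos, hne]
  · -- the grim strategy differs across the two subgames at stage 1
    intro H
    have := H 1 le_rfl (fun _ _ => true)
    have h1 : (grimTrigger true).act 1
        (splice (fun _ _ => Bool) 1 (fun _ _ => true) (fun _ _ => true)) = true := by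
      apply grim_act_pos
      intro s hs j
      simp [splice, Nat.lt_one_iff.mp hs]
    have h2 : (grimTrigger true).act 1
        (splice (fun _ _ => Bool) 1 (fun _ _ => false) (fun _ _ => true)) = false := by
      apply grim_act_neg
      intro Hc
      have := Hc 0 (by omega) true
      simp [splice] at this
    rw [h1, h2] at this
    simp at this
end

section
/- In finite extensive-form games of perfect information with generic payoffs (no player is indifferent between any two terminal nodes), every subgame perfect equilibrium is a credible equilibrium; hence credible equilibrium and subgame perfect equilibrium coincide. -/
/-!  Finite extensive-form games of perfect information, subgame perfect
equilibrium, and credible equilibrium (Ismail, "Credible equilibrium"). -/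

namespace ExtGame

/-- A finite extensive-form game of perfect information: a leaf carries the
payoff vector of a terminal node; an internal node is owned by a player and
has finitely many moves. -/
inductive GameTree (ι : Type) : Type
  | leaf : (ι → ℝ) → GameTree ι
  | node : ι → (n : ℕ) → (Fin (n + 1) → GameTree ι) → GameTree ι

variable {ι : Type}

/-- A strategy profile on a tree: a chosen move at every decision node. -/
def Profile : GameTree ι → Type
  | .leaf _ => PUnit
  | .node _ n f => Fin (n + 1) × ∀ j, Profile (f j)

/-- The payoff to player `i` when the profile is followed from the root. -/
def payoff : (g : GameTree ι) → Profile g → ι → ℝ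
  | .leaf v, _, i => v i
  | .node _ _ f, σ, i => payoff (f σ.1) (σ.2 σ.1) i

/-- `τ` agrees with `σ` except possibly at nodes owned by `i` (i.e. `τ` is a
unilateral deviation of player `i` from `σ`). -/
def AgreesOff (i : ι) : (g : GameTree ι) → Profile g → Profile g → Prop
  | .leaf _, _, _ => True
  | .node j _ f, σ, τ => (j ≠ i → σ.1 = τ.1) ∧ ∀ k, AgreesOff i (f k) (σ.2 k) (τ.2 k)

/-- Nash equilibrium: no unilateral deviation is profitable. -/
def Nash (g : GameTree ι) (σ : Profile g) : Prop :=
  ∀ i (τ : Profile g), AgreesOff i g σ τ → payoff g τ i ≤ payoff g σ i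

/-- Subgame perfect equilibrium: Nash in every subgame. -/
def SPE : (g : GameTree ι) → Profile g → Prop
  | .leaf _, _ => True
  | .node j n f, σ => Nash (.node j n f) σ ∧ ∀ k, SPE (f k) (σ.2 k)

/-- The list of subgames (subtree occurrences) of `g`, each paired with the
restriction of the profile `σ` to it. -/
def subgames : (g : GameTree ι) → Profile g → List ((g' : GameTree ι) × Profile g')
  | .leaf v, σ => [⟨.leaf v, σ⟩]
  | .node j n f, σ =>
      ⟨.node j n f, σ⟩ :: (List.finRange (n + 1)).flatMap fun k => subgames (f k) (σ.2 k)

/-- The type of player `i`'s strategies on the tree `g`. -/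
def PlayerStrat (i : ι) : GameTree ι → Type
  | .leaf _ => PUnit
  | .node j n f => (j = i → Fin (n + 1)) × ∀ k, PlayerStrat i (f k)

/-- Player `i`'s component of a strategy profile. -/
def stratOf (i : ι) : (g : GameTree ι) → Profile g → PlayerStrat i g
  | .leaf _, _ => PUnit.unit
  | .node _ _ f, σ => ⟨fun _ => σ.1, fun k => stratOf i (f k) (σ.2 k)⟩

/-- Credible equilibrium: an SPE such that for any two equivalent subgames
(identical subtrees, i.e. the same game up to relabeling in this intrinsic
representation), if a player's strategy restricted to the two subgames
differs, then her payoffs in the two subgames are equal. -/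
def Credible (g : GameTree ι) (σ : Profile g) : Prop :=
  SPE g σ ∧
    ∀ p ∈ subgames g σ, ∀ q ∈ subgames g σ, ∀ hpq : p.1 = q.1, ∀ i : ι,
      stratOf i p.1 p.2 ≠ stratOf i p.1 (cast (congrArg Profile hpq.symm) q.2) →
        payoff p.1 p.2 i = payoff q.1 q.2 i

/-- The payoff vectors of the terminal nodes of `g`. -/
def leaves : GameTree ι → List (ι → ℝ)
  | .leaf v => [v]
  | .node _ n f => (List.finRange (n + 1)).flatMap fun k => leaves (f k)

theorem payoff_mem_leaves : ∀ (g : GameTree ι) (σ : Profile g), payoff g σ ∈ leaves g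
  | .leaf v, _ => List.mem_singleton.mpr rfl
  | .node j n f, σ => by
      show payoff (f σ.1) (σ.2 σ.1) ∈ (List.finRange (n + 1)).flatMap fun k => leaves (f k)
      exact List.mem_flatMap.mpr ⟨σ.1, List.mem_finRange _,
        payoff_mem_leaves (f σ.1) (σ.2 σ.1)⟩

theorem agreesOff_refl (i : ι) : ∀ (g : GameTree ι) (σ : Profile g), AgreesOff i g σ σ
  | .leaf _, _ => trivial
  | .node _ _ f, σ => ⟨fun _ => rfl, fun k => agreesOff_refl i (f k) (σ.2 k)⟩

/-- genericity of the leaves of a node passes to each subtree, and between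
subtrees. -/
theorem generic_node {j : ι} {n : ℕ} {f : Fin (n + 1) → GameTree ι}
    (hgen : (leaves (.node j n f)).Pairwise fun v w => ∀ i, v i ≠ w i) :
    (∀ k, (leaves (f k)).Pairwise fun v w => ∀ i, v i ≠ w i) ∧
      ∀ k k', k ≠ k' → ∀ v ∈ leaves (f k), ∀ w ∈ leaves (f k'), ∀ i, v i ≠ w i := by
  have h : (((List.finRange (n + 1)).map fun k => leaves (f k)).flatten.Pairwise
      fun v w => ∀ i, v i ≠ w i) := hgen
  rw [List.pairwise_flatten] at h
  obtain ⟨h1, h2⟩ := h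
  refine ⟨fun k => h1 _ (List.mem_map_of_mem (List.mem_finRange k)), ?_⟩
  rw [List.pairwise_map] at h2
  have h2' : (List.finRange (n + 1)).Pairwise fun k k' =>
      (∀ v ∈ leaves (f k), ∀ w ∈ leaves (f k'), ∀ i, v i ≠ w i) ∨
      (∀ v ∈ leaves (f k'), ∀ w ∈ leaves (f k), ∀ i, v i ≠ w i) :=
    h2.imp fun h => Or.inl h
  have hsym : Symmetric fun k k' : Fin (n + 1) =>
      (∀ v ∈ leaves (f k), ∀ w ∈ leaves (f k'), ∀ i, v i ≠ w i) ∨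
      (∀ v ∈ leaves (f k'), ∀ w ∈ leaves (f k), ∀ i, v i ≠ w i) :=
    fun _ _ h => h.symm
  intro k k' hkk' v hv w hw i
  rcases (@List.Pairwise.forall _ _ _ ⟨fun _ _ h => hsym h⟩ h2') (List.mem_finRange k) (List.mem_finRange k') hkk' with h | h
  · exact h v hv w hw i
  · exact fun he => h w hw v hv i he.symm

theorem spe_payoff_unique : ∀ (g : GameTree ι),
    ((leaves g).Pairwise fun v w => ∀ i, v i ≠ w i) →
    ∀ σ τ : Profile g, SPE g σ → SPE g τ → ∀ i, payoff g σ i = payoff g τ i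
  | .leaf _, _, _, _, _, _, _ => rfl
  | .node j n f, hgen, σ, τ, hσ, hτ, i => by
      obtain ⟨hg1, hg2⟩ := generic_node hgen
      have ih : ∀ k (a b : Profile (f k)), SPE (f k) a → SPE (f k) b →
          ∀ i, payoff (f k) a i = payoff (f k) b i :=
        fun k => spe_payoff_unique (f k) (hg1 k)
      -- Nash at the root: the owner's choice is optimal
      have nashσ : ∀ k, payoff (f k) (σ.2 k) j ≤ payoff (f σ.1) (σ.2 σ.1) j := by
        intro k
        have := hσ.1 j (k, σ.2) ⟨fun h => absurd rfl h, fun m => agreesOff_refl j _ _⟩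
        exact this
      have nashτ : ∀ k, payoff (f k) (τ.2 k) j ≤ payoff (f τ.1) (τ.2 τ.1) j := by
        intro k
        have := hτ.1 j (k, τ.2) ⟨fun h => absurd rfl h, fun m => agreesOff_refl j _ _⟩
        exact this
      by_cases hk : σ.1 = τ.1
      · show payoff (f σ.1) (σ.2 σ.1) i = payoff (f τ.1) (τ.2 τ.1) i
        rw [hk] at *
        exact ih τ.1 (σ.2 τ.1) (τ.2 τ.1) (hσ.2 τ.1) (hτ.2 τ.1) i
      · exfalso
        have h1 : payoff (f σ.1) (σ.2 σ.1) j ≤ payoff (f τ.1) (τ.2 τ.1) j := by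
          calc payoff (f σ.1) (σ.2 σ.1) j
              = payoff (f σ.1) (τ.2 σ.1) j :=
                ih σ.1 (σ.2 σ.1) (τ.2 σ.1) (hσ.2 σ.1) (hτ.2 σ.1) j
            _ ≤ _ := nashτ σ.1
        have h2 : payoff (f τ.1) (τ.2 τ.1) j ≤ payoff (f σ.1) (σ.2 σ.1) j := by
          calc payoff (f τ.1) (τ.2 τ.1) j
              = payoff (f τ.1) (σ.2 τ.1) j :=
                ih τ.1 (τ.2 τ.1) (σ.2 τ.1) (hτ.2 τ.1) (hσ.2 τ.1) j
            _ ≤ _ := nashσ τ.1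
        exact hg2 σ.1 τ.1 hk _ (payoff_mem_leaves (f σ.1) (σ.2 σ.1)) _
          (payoff_mem_leaves (f τ.1) (τ.2 τ.1)) j (le_antisymm h1 h2)

theorem spe_of_mem_subgames : ∀ (g : GameTree ι) (σ : Profile g), SPE g σ →
    ∀ p ∈ subgames g σ, SPE p.1 p.2
  | .leaf _, _, _, p, hp => by
      rw [subgames, List.mem_singleton] at hp; subst hp; trivial
  | .node j n f, σ, hσ, p, hp => by
      rw [subgames, List.mem_cons] at hp
      rcases hp with hp | hp
      · subst hp; exact hσ
      · obtain ⟨k, -, hk⟩ := List.mem_flatMap.mp hp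
        exact spe_of_mem_subgames (f k) (σ.2 k) (hσ.2 k) p hk

theorem leaves_sublist_of_mem_subgames : ∀ (g : GameTree ι) (σ : Profile g),
    ∀ p ∈ subgames g σ, (leaves p.1).Sublist (leaves g)
  | .leaf _, _, p, hp => by
      rw [subgames, List.mem_singleton] at hp; subst hp; exact List.Sublist.refl _
  | .node j n f, σ, p, hp => by
      rw [subgames, List.mem_cons] at hp
      rcases hp with hp | hp
      · subst hp; exact List.Sublist.refl _
      · obtain ⟨k, -, hk⟩ := List.mem_flatMap.mp hp
        refine ((leaves_sublist_of_mem_subgames (f k) (σ.2 k) p hk).trans ?_)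
        exact List.sublist_flatten_of_mem
          (List.mem_map_of_mem (f := fun k => leaves (f k)) (List.mem_finRange k))

end ExtGame

open ExtGame in
/-- In a finite extensive-form game of perfect information
with generic payoffs (no player is indifferent between any two terminal
nodes), every subgame perfect equilibrium is a credible equilibrium; hence
the two notions coincide. -/
theorem perfect_info_SPE_iff_credible
    {ι : Type} (g : GameTree ι)
    (hgen : (leaves g).Pairwise fun v w => ∀ i, v i ≠ w i)
    (σ : Profile g) :
    SPE g σ ↔ Credible g σ := by
  refine ⟨fun hσ => ⟨hσ, ?_⟩, fun h => h.1⟩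
  rintro ⟨A, a⟩ hp ⟨B, b⟩ hq hpq i -
  dsimp at hpq ⊢
  subst hpq
  exact spe_payoff_unique A
    (List.Pairwise.sublist (leaves_sublist_of_mem_subgames g σ _ hp) hgen) a b
    (spe_of_mem_subgames g σ hσ _ hp) (spe_of_mem_subgames g σ hσ _ hq) i
end
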